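/- arXiv:0902.1628 — 2 statements merged into one kernel-verified Lean document; each statement's English description precedes it below -/
import Mathlib

section
/- The Lie algebra sp_N(ℝ) is generated, as a Lie algebra, by the set {X_{ij}, Y_{ij} : i,j ∈ {1,…,N}, |i-j| ≤ 1}. -/
open Matrix

attribute [local instance 100] LieRing.ofAssociativeRing

def elemE (N : ℕ) (i j : Fin N) : Matrix (Fin N) (Fin N) ℝ :=
  Matrix.single i j 1

noncomputable def matX (N : ℕ) (i j : Fin N) : Matrix (Fin N ⊕ Fin N) (Fin N ⊕ Fin N) ℝ :=
  (1/2 : ℝ) • Matrix.fromBlocks 0 (elemE N i j + elemE N j i) 0 0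

noncomputable def matY (N : ℕ) (i j : Fin N) : Matrix (Fin N ⊕ Fin N) (Fin N ⊕ Fin N) ℝ :=
  (matX N i j)ᵀ

def symplJ (N : ℕ) : Matrix (Fin N ⊕ Fin N) (Fin N ⊕ Fin N) ℝ :=
  Matrix.fromBlocks 0 (-1) 1 0

namespace SpGenAux

variable {N : ℕ}

/-- abbreviation for the ambient matrix space -/
local notation "Mat" => Matrix (Fin N ⊕ Fin N) (Fin N ⊕ Fin N) ℝ

lemma elemE_mul (i j k l : Fin N) :
    elemE N i j * elemE N k l = if j = k then elemE N i l else 0 := by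
  by_cases h : j = k
  · subst h
    simpa [elemE] using Matrix.single_mul_single_same 1 i j l 1
  · simp [h, elemE, Matrix.single_mul_single_of_ne _ _ _ _ h]

lemma elemE_transpose (i j : Fin N) : (elemE N i j)ᵀ = elemE N j i := by
  ext a b
  simp only [elemE, Matrix.transpose_apply, Matrix.single, Matrix.of_apply]
  by_cases h1 : i = b <;> by_cases h2 : j = a <;> simp [h1, h2, and_comm]

/-- H-type matrices -/
def HMat (N : ℕ) (i j : Fin N) : Matrix (Fin N ⊕ Fin N) (Fin N ⊕ Fin N) ℝ :=
  Matrix.fromBlocks (elemE N i j) 0 0 (-(elemE N j i))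

/-- X-type matrices (2 times matX) -/
def XMat (N : ℕ) (i j : Fin N) : Matrix (Fin N ⊕ Fin N) (Fin N ⊕ Fin N) ℝ :=
  Matrix.fromBlocks 0 (elemE N i j + elemE N j i) 0 0

/-- Y-type matrices (2 times matY) -/
def YMat (N : ℕ) (i j : Fin N) : Matrix (Fin N ⊕ Fin N) (Fin N ⊕ Fin N) ℝ :=
  Matrix.fromBlocks 0 0 (elemE N i j + elemE N j i) 0

lemma lie_XY (S T : Matrix (Fin N) (Fin N) ℝ) :
    ⁅(Matrix.fromBlocks 0 S 0 0 : Mat), (Matrix.fromBlocks 0 0 T 0 : Mat)⁆ =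
      Matrix.fromBlocks (S * T) 0 0 (-(T * S)) := by
  simp [Ring.lie_def, Matrix.fromBlocks_multiply, sub_eq_add_neg,
    Matrix.fromBlocks_neg, Matrix.fromBlocks_add]

lemma lie_HX (A D S : Matrix (Fin N) (Fin N) ℝ) :
    ⁅(Matrix.fromBlocks A 0 0 D : Mat), (Matrix.fromBlocks 0 S 0 0 : Mat)⁆ =
      Matrix.fromBlocks 0 (A * S - S * D) 0 0 := by
  simp [Ring.lie_def, Matrix.fromBlocks_multiply, sub_eq_add_neg,
    Matrix.fromBlocks_neg, Matrix.fromBlocks_add]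

lemma lie_HY (A D T : Matrix (Fin N) (Fin N) ℝ) :
    ⁅(Matrix.fromBlocks A 0 0 D : Mat), (Matrix.fromBlocks 0 0 T 0 : Mat)⁆ =
      Matrix.fromBlocks 0 0 (D * T - T * A) 0 := by
  simp [Ring.lie_def, Matrix.fromBlocks_multiply, sub_eq_add_neg,
    Matrix.fromBlocks_neg, Matrix.fromBlocks_add]

lemma lie_HH (A D A' D' : Matrix (Fin N) (Fin N) ℝ) :
    ⁅(Matrix.fromBlocks A 0 0 D : Mat), (Matrix.fromBlocks A' 0 0 D' : Mat)⁆ =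
      Matrix.fromBlocks (A * A' - A' * A) 0 0 (D * D' - D' * D) := by
  simp [Ring.lie_def, Matrix.fromBlocks_multiply, sub_eq_add_neg,
    Matrix.fromBlocks_neg, Matrix.fromBlocks_add]

/-- the generating set -/
def genS (N : ℕ) : Set (Matrix (Fin N ⊕ Fin N) (Fin N ⊕ Fin N) ℝ) :=
  {A | ∃ i j : Fin N, |(i : ℤ) - (j : ℤ)| ≤ 1 ∧ (A = matX N i j ∨ A = matY N i j)}

/-- the Lie span -/
def LL (N : ℕ) : LieSubalgebra ℝ (Matrix (Fin N ⊕ Fin N) (Fin N ⊕ Fin N) ℝ) :=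
  LieSubalgebra.lieSpan ℝ _ (genS N)

lemma XMat_eq_smul (i j : Fin N) : XMat N i j = (2 : ℝ) • matX N i j := by
  rw [matX, smul_smul]
  norm_num [XMat]

lemma YMat_eq_smul (i j : Fin N) : YMat N i j = (2 : ℝ) • matY N i j := by
  rw [matY, matX, Matrix.transpose_smul, smul_smul]
  norm_num [YMat, Matrix.fromBlocks_transpose, Matrix.transpose_add, elemE_transpose,
    add_comm (elemE N j i)]

lemma XMat_mem (i j : Fin N) (h : |(i : ℤ) - (j : ℤ)| ≤ 1) : XMat N i j ∈ LL N := by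
  rw [XMat_eq_smul]
  exact (LL N).smul_mem _ (LieSubalgebra.subset_lieSpan ⟨i, j, h, Or.inl rfl⟩)

lemma YMat_mem (i j : Fin N) (h : |(i : ℤ) - (j : ℤ)| ≤ 1) : YMat N i j ∈ LL N := by
  rw [YMat_eq_smul]
  exact (LL N).smul_mem _ (LieSubalgebra.subset_lieSpan ⟨i, j, h, Or.inr rfl⟩)

lemma HMat_mem_adj (i j : Fin N) (h : |(i : ℤ) - (j : ℤ)| ≤ 1) : HMat N i j ∈ LL N := by
  by_cases hij : i = j
  · subst hij
    have hb := lie_XY (N := N) (elemE N i i + elemE N i i) (elemE N i i + elemE N i i)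
    have hE : (elemE N i i + elemE N i i) * (elemE N i i + elemE N i i)
        = (4 : ℝ) • elemE N i i := by
      simp only [mul_add, add_mul, elemE_mul, if_pos rfl, eq_self_iff_true, if_true]
      module
    have : HMat N i i = (1/4 : ℝ) • ⁅XMat N i i, YMat N i i⁆ := by
      rw [XMat, YMat, hb, hE, Matrix.fromBlocks_smul]
      rw [HMat, Matrix.fromBlocks_inj]
      norm_num [smul_smul]
    rw [this]
    exact (LL N).smul_mem _ ((LL N).lie_mem (XMat_mem i i (by simp)) (YMat_mem i i (by simp)))
  · have hb := lie_XY (N := N) (elemE N i i + elemE N i i) (elemE N i j + elemE N j i)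
    have h1 : (elemE N i i + elemE N i i) * (elemE N i j + elemE N j i)
        = (2 : ℝ) • elemE N i j := by
      simp only [mul_add, add_mul, elemE_mul, if_pos rfl, eq_self_iff_true, if_true, if_neg hij]
      module
    have h2 : (elemE N i j + elemE N j i) * (elemE N i i + elemE N i i)
        = (2 : ℝ) • elemE N j i := by
      simp only [mul_add, add_mul, elemE_mul, if_pos rfl, eq_self_iff_true, if_true, if_neg (Ne.symm hij)]
      module
    have : HMat N i j = (1/2 : ℝ) • ⁅XMat N i i, YMat N i j⁆ := by
      rw [XMat, YMat, hb, h1, h2, Matrix.fromBlocks_smul]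
      rw [HMat, Matrix.fromBlocks_inj]
      norm_num [smul_smul]
    rw [this]
    exact (LL N).smul_mem _ ((LL N).lie_mem (XMat_mem i i (by simp)) (YMat_mem i j h))

lemma lie_HMat (i j k : Fin N) (hij : i ≠ j) :
    ⁅HMat N i k, HMat N k j⁆ = HMat N i j := by
  rw [HMat, HMat, lie_HH, HMat, Matrix.fromBlocks_inj]
  refine ⟨?_, rfl, rfl, ?_⟩
  · simp [elemE_mul, Ne.symm hij]
  · simp [elemE_mul, hij]

lemma HMat_mem_aux : ∀ (n : ℕ) (i j : Fin N), ((i : ℤ) - (j : ℤ)).natAbs ≤ n →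
    HMat N i j ∈ LL N := by
  intro n
  induction n with
  | zero =>
    intro i j h
    exact HMat_mem_adj i j (by rw [Int.abs_eq_natAbs]; omega)
  | succ n ih =>
    intro i j h
    by_cases h' : ((i : ℤ) - (j : ℤ)).natAbs ≤ n
    · exact ih i j h'
    · by_cases hadj : ((i : ℤ) - (j : ℤ)).natAbs ≤ 1
      · exact HMat_mem_adj i j (by rw [Int.abs_eq_natAbs]; omega)
      · have hij : i ≠ j := by
          intro he; subst he; simp at hadj
        rcases Nat.lt_or_ge i.val j.val with hlt | hge
        · have hjN : (j : ℕ) - 1 < N := by omega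
          set k : Fin N := ⟨j.val - 1, hjN⟩ with hk
          have hkz : (k : ℤ) = (j : ℤ) - 1 := by
            simp [hk]
            omega
          have hik : ((i : ℤ) - (k : ℤ)).natAbs ≤ n := by omega
          have hkj : ((k : ℤ) - (j : ℤ)).natAbs ≤ 1 := by omega
          rw [← lie_HMat i j k hij]
          exact (LL N).lie_mem (ih i k hik)
            (HMat_mem_adj k j (by rw [Int.abs_eq_natAbs]; omega))
        · have hij' : (j : ℕ) < i.val := by
            rcases Nat.lt_or_ge j.val i.val with h1 | h1
            · exact h1
            · exfalso; apply hij; exact Fin.ext (by omega)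
          have hjN : (j : ℕ) + 1 < N := by
            have := i.isLt; omega
          set k : Fin N := ⟨j.val + 1, hjN⟩ with hk
          have hkz : (k : ℤ) = (j : ℤ) + 1 := by simp [hk]
          have hik : ((i : ℤ) - (k : ℤ)).natAbs ≤ n := by omega
          rw [← lie_HMat i j k hij]
          exact (LL N).lie_mem (ih i k hik)
            (HMat_mem_adj k j (by rw [Int.abs_eq_natAbs]; omega))

lemma HMat_mem (i j : Fin N) : HMat N i j ∈ LL N :=
  HMat_mem_aux _ i j le_rfl

lemma XMat_mem_all (i j : Fin N) : XMat N i j ∈ LL N := by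
  have key : ⁅HMat N i j, XMat N j j⁆ = (2 : ℝ) • XMat N i j := by
    rw [HMat, XMat, lie_HX, XMat, Matrix.fromBlocks_smul, Matrix.fromBlocks_inj]
    refine ⟨by simp, ?_, by simp, by simp⟩
    simp only [mul_add, add_mul, mul_neg, elemE_mul, eq_self_iff_true, if_true, sub_neg_eq_add]
    module
  have hx : XMat N i j = (1/2 : ℝ) • ⁅HMat N i j, XMat N j j⁆ := by
    rw [key, smul_smul]; norm_num
  rw [hx]
  exact (LL N).smul_mem _ ((LL N).lie_mem (HMat_mem i j) (XMat_mem j j (by simp)))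

lemma YMat_mem_all (i j : Fin N) : YMat N i j ∈ LL N := by
  have key : ⁅HMat N j i, YMat N j j⁆ = (-2 : ℝ) • YMat N i j := by
    rw [HMat, YMat, lie_HY, YMat, Matrix.fromBlocks_smul, Matrix.fromBlocks_inj]
    refine ⟨by simp, by simp, ?_, by simp⟩
    simp only [mul_add, add_mul, neg_mul, elemE_mul, eq_self_iff_true, if_true]
    module
  have hy : YMat N i j = (-(1/2) : ℝ) • ⁅HMat N j i, YMat N j j⁆ := by
    rw [key, smul_smul]; norm_num
  rw [hy]
  exact (LL N).smul_mem _ ((LL N).lie_mem (HMat_mem j i) (YMat_mem j j (by simp)))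

lemma sumH (A : Matrix (Fin N) (Fin N) ℝ) :
    ∑ i, ∑ j, A i j • HMat N i j = Matrix.fromBlocks A 0 0 (-Aᵀ) := by
  ext a b
  cases a <;> cases b <;>
    simp [HMat, Matrix.sum_apply, elemE, Matrix.single, Matrix.fromBlocks,
      ite_and, mul_ite, Finset.sum_ite_eq, Finset.sum_ite_eq']

lemma sumX (B : Matrix (Fin N) (Fin N) ℝ) (hB : Bᵀ = B) :
    ∑ i, ∑ j, (B i j / 2) • XMat N i j = Matrix.fromBlocks 0 B 0 0 := by
  have hBs : ∀ a b, B b a = B a b := fun a b => congrFun (congrFun hB a) b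
  ext a b
  cases a <;> cases b <;>
    simp [XMat, Matrix.sum_apply, elemE, Matrix.single, Matrix.fromBlocks,
      ite_and, mul_ite, Finset.sum_ite_eq, Finset.sum_ite_eq', mul_add, add_mul,
      Finset.sum_add_distrib]
  case _ a b => rw [hBs b a]; ring

lemma sumY (C : Matrix (Fin N) (Fin N) ℝ) (hC : Cᵀ = C) :
    ∑ i, ∑ j, (C i j / 2) • YMat N i j = Matrix.fromBlocks 0 0 C 0 := by
  have hCs : ∀ a b, C b a = C a b := fun a b => congrFun (congrFun hC a) b
  ext a b
  cases a <;> cases b <;>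
    simp [YMat, Matrix.sum_apply, elemE, Matrix.single, Matrix.fromBlocks,
      ite_and, mul_ite, Finset.sum_ite_eq, Finset.sum_ite_eq', mul_add, add_mul,
      Finset.sum_add_distrib]
  case _ a b => rw [hCs b a]; ring

/-- the symplectic Lie algebra as a Lie subalgebra -/
def sp (N : ℕ) : LieSubalgebra ℝ (Matrix (Fin N ⊕ Fin N) (Fin N ⊕ Fin N) ℝ) where
  carrier := {M | Mᵀ * symplJ N + symplJ N * M = 0}
  zero_mem' := by simp
  add_mem' := by
    intro a b ha hb
    simp only [Set.mem_setOf_eq] at *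
    rw [Matrix.transpose_add, add_mul, mul_add,
      eq_neg_of_add_eq_zero_left ha, eq_neg_of_add_eq_zero_left hb]
    abel
  smul_mem' := by
    intro c a ha
    simp only [Set.mem_setOf_eq] at *
    rw [Matrix.transpose_smul, smul_mul_assoc, mul_smul_comm, ← smul_add, ha, smul_zero]
  lie_mem' := by
    intro a b ha hb
    simp only [Set.mem_setOf_eq] at *
    have ha' : aᵀ * symplJ N = -(symplJ N * a) := eq_neg_of_add_eq_zero_left ha
    have hb' : bᵀ * symplJ N = -(symplJ N * b) := eq_neg_of_add_eq_zero_left hb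
    rw [Ring.lie_def]
    calc (a * b - b * a)ᵀ * symplJ N + symplJ N * (a * b - b * a)
        = bᵀ * (aᵀ * symplJ N) - aᵀ * (bᵀ * symplJ N)
            + (symplJ N * (a * b) - symplJ N * (b * a)) := by
          rw [Matrix.transpose_sub, Matrix.transpose_mul, Matrix.transpose_mul]
          noncomm_ring
      _ = bᵀ * (-(symplJ N * a)) - aᵀ * (-(symplJ N * b))
            + (symplJ N * (a * b) - symplJ N * (b * a)) := by rw [ha', hb']
      _ = -((bᵀ * symplJ N) * a) + (aᵀ * symplJ N) * b
            + (symplJ N * (a * b) - symplJ N * (b * a)) := by noncomm_ring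
      _ = -((-(symplJ N * b)) * a) + (-(symplJ N * a)) * b
            + (symplJ N * (a * b) - symplJ N * (b * a)) := by rw [ha', hb']
      _ = 0 := by noncomm_ring

lemma X_mem_sp (S : Matrix (Fin N) (Fin N) ℝ) (hS : Sᵀ = S) :
    (Matrix.fromBlocks 0 S 0 0 : Mat) ∈ sp N := by
  show _ + _ = _
  rw [Matrix.fromBlocks_transpose, symplJ, Matrix.fromBlocks_multiply,
    Matrix.fromBlocks_multiply, Matrix.fromBlocks_add]
  simp [hS]

lemma Y_mem_sp (T : Matrix (Fin N) (Fin N) ℝ) (hT : Tᵀ = T) :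
    (Matrix.fromBlocks 0 0 T 0 : Mat) ∈ sp N := by
  show _ + _ = _
  rw [Matrix.fromBlocks_transpose, symplJ, Matrix.fromBlocks_multiply,
    Matrix.fromBlocks_multiply, Matrix.fromBlocks_add]
  simp [hT]

lemma elemE_sym_transpose (i j : Fin N) :
    (elemE N i j + elemE N j i)ᵀ = elemE N i j + elemE N j i := by
  rw [Matrix.transpose_add, elemE_transpose, elemE_transpose, add_comm]

lemma genS_subset_sp : genS N ⊆ (sp N : Set (Matrix (Fin N ⊕ Fin N) (Fin N ⊕ Fin N) ℝ)) := by
  rintro A ⟨i, j, -, hA | hA⟩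
  · subst hA
    exact (sp N).smul_mem _ (X_mem_sp _ (elemE_sym_transpose i j))
  · subst hA
    have : matY N i j = (1/2 : ℝ) • Matrix.fromBlocks 0 0 (elemE N i j + elemE N j i) 0 := by
      rw [matY, matX, Matrix.transpose_smul, Matrix.fromBlocks_transpose,
        elemE_sym_transpose]
      simp
    rw [this]
    exact (sp N).smul_mem _ (Y_mem_sp _ (elemE_sym_transpose i j))

end SpGenAux

/-- `sp_N(ℝ)` is generated, as a Lie algebra (with the commutator bracket on matrices),
by the set `{X_{ij}, Y_{ij} : |i - j| ≤ 1}`. -/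
theorem lieSpan_XY_near_diag_eq_sp (N : ℕ) :
    ∀ M : Matrix (Fin N ⊕ Fin N) (Fin N ⊕ Fin N) ℝ,
      M ∈ LieSubalgebra.lieSpan ℝ (Matrix (Fin N ⊕ Fin N) (Fin N ⊕ Fin N) ℝ)
        {A | ∃ i j : Fin N, |(i : ℤ) - (j : ℤ)| ≤ 1 ∧ (A = matX N i j ∨ A = matY N i j)} ↔
      Mᵀ * symplJ N + symplJ N * M = 0 := by
  intro M
  constructor
  · intro hM
    exact (LieSubalgebra.lieSpan_le.mpr SpGenAux.genS_subset_sp) hM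
  · intro hM
    show M ∈ SpGenAux.LL N
    set A := M.toBlocks₁₁ with hA
    set B := M.toBlocks₁₂ with hB
    set C := M.toBlocks₂₁ with hC
    set D := M.toBlocks₂₂ with hDdef
    have hM' : Matrix.fromBlocks A B C D = M := Matrix.fromBlocks_toBlocks M
    have h2 : Matrix.fromBlocks (Cᵀ - C) (-Aᵀ - D) (Dᵀ + A) (B - Bᵀ)
        = (0 : Matrix (Fin N ⊕ Fin N) (Fin N ⊕ Fin N) ℝ) := by
      calc Matrix.fromBlocks (Cᵀ - C) (-Aᵀ - D) (Dᵀ + A) (B - Bᵀ)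
          = (Matrix.fromBlocks A B C D)ᵀ * symplJ N + symplJ N * Matrix.fromBlocks A B C D := by
            rw [Matrix.fromBlocks_transpose, symplJ, Matrix.fromBlocks_multiply,
              Matrix.fromBlocks_multiply, Matrix.fromBlocks_add, Matrix.fromBlocks_inj]
            refine ⟨by simp; try abel, by simp; try abel, by simp; try abel, by simp; try abel⟩
        _ = Mᵀ * symplJ N + symplJ N * M := by rw [hM']
        _ = 0 := hM
    rw [← Matrix.fromBlocks_zero, Matrix.fromBlocks_inj] at h2
    obtain ⟨hc, hd, -, hb⟩ := h2
    have hCt : Cᵀ = C := sub_eq_zero.mp hc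
    have hBt : Bᵀ = B := (sub_eq_zero.mp hb).symm
    have hD : D = -Aᵀ := (sub_eq_zero.mp hd).symm
    have hdecomp : M = (∑ i, ∑ j, A i j • SpGenAux.HMat N i j)
        + (∑ i, ∑ j, (B i j / 2) • SpGenAux.XMat N i j)
        + (∑ i, ∑ j, (C i j / 2) • SpGenAux.YMat N i j) := by
      rw [SpGenAux.sumH, SpGenAux.sumX B hBt, SpGenAux.sumY C hCt, ← hM', hD,
        Matrix.fromBlocks_add, Matrix.fromBlocks_add, Matrix.fromBlocks_inj]
      refine ⟨by simp, by simp, by simp, by simp⟩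
    rw [hdecomp]
    rw [← LieSubalgebra.mem_toSubmodule (SpGenAux.LL N)]
    refine Submodule.add_mem _ (Submodule.add_mem _ ?_ ?_) ?_ <;>
      refine Submodule.sum_mem _ fun i _ => Submodule.sum_mem _ fun j _ =>
        Submodule.smul_mem _ _ ?_
    · exact (LieSubalgebra.mem_toSubmodule _).mpr (SpGenAux.HMat_mem i j)
    · exact (LieSubalgebra.mem_toSubmodule _).mpr (SpGenAux.XMat_mem_all i j)
    · exact (LieSubalgebra.mem_toSubmodule _).mpr (SpGenAux.YMat_mem_all i j)
end

section
/- Let V ∈ L¹_loc(ℝ, M_N(ℝ)) with ‖V‖_{ℓ,u} := sup_{x∈ℝ} ∫_x^{x+ℓ} ‖V(t)‖ dt < ∞ for some fixed ℓ > 0. Then there exists C > 0 (depending only on ℓ and ‖V‖_{ℓ,u}) such that for every solution u of −u'' + Vu = 0 and every x ∈ ℝ, ∫_{x−ℓ}^{x+ℓ} ‖u(t)‖² dt ≥ C(‖u(x)‖² + ‖u'(x)‖²). -/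
open Matrix MeasureTheory intervalIntegral Set

/-- Monotonicity of the interval integral of a nonnegative function under
enlarging the interval. -/
lemma subint_le {f : ℝ → ℝ} (hf : ∀ a b : ℝ, IntervalIntegrable f volume a b)
    (hf0 : ∀ t, 0 ≤ f t) {a b c d : ℝ} (hab : a ≤ b) (hbc : b ≤ c) (hcd : c ≤ d) :
    ∫ t in b..c, f t ≤ ∫ t in a..d, f t := by
  have h1 : (∫ t in a..b, f t) + ∫ t in b..c, f t = ∫ t in a..c, f t :=
    integral_add_adjacent_intervals (hf a b) (hf b c)
  have h2 : (∫ t in a..c, f t) + ∫ t in c..d, f t = ∫ t in a..d, f t :=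
    integral_add_adjacent_intervals (hf a c) (hf c d)
  have h3 : 0 ≤ ∫ t in a..b, f t := integral_nonneg hab fun t _ => hf0 t
  have h4 : 0 ≤ ∫ t in c..d, f t := integral_nonneg hcd fun t _ => hf0 t
  linarith

section gronwall

variable {E E' h : ℝ → ℝ}

lemma gron_E'_int (hE : ∀ t, HasDerivAt E (E' t) t)
    (hh : ∀ a b : ℝ, IntervalIntegrable h volume a b)
    (hh0 : ∀ t, 0 ≤ h t) (hE0 : ∀ t, 0 ≤ E t)
    (hbd : ∀ t, |E' t| ≤ h t * E t) (p q : ℝ) :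
    IntervalIntegrable E' volume p q := by
  have hEc : Continuous E := by
    rw [continuous_iff_continuousAt]; exact fun t => (hE t).continuousAt
  obtain ⟨t₀, _, ht₀⟩ := isCompact_uIcc.exists_isMaxOn (nonempty_uIcc (a := p) (b := q))
    hEc.continuousOn
  refine ((hh p q).mul_const (E t₀)).mono_fun ?_ ?_
  · have hEq : E' = deriv E := funext fun t => ((hE t).deriv).symm
    rw [hEq]
    exact (measurable_deriv E).aestronglyMeasurable.restrict
  · filter_upwards [ae_restrict_mem measurableSet_uIoc] with t ht
    have h2 : E t ≤ E t₀ := ht₀ (uIoc_subset_uIcc ht)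
    have h3 : h t * E t ≤ h t * E t₀ := mul_le_mul_of_nonneg_left h2 (hh0 t)
    have h4 : |E' t| ≤ h t * E t₀ := (hbd t).trans h3
    have : ‖E' t‖ = |E' t| := rfl
    rw [Real.norm_eq_abs]
    exact h4.trans (le_abs_self _)

lemma gron_int (hE : ∀ t, HasDerivAt E (E' t) t)
    (hh : ∀ a b : ℝ, IntervalIntegrable h volume a b)
    (hh0 : ∀ t, 0 ≤ h t) (hE0 : ∀ t, 0 ≤ E t)
    (hbd : ∀ t, |E' t| ≤ h t * E t) {p q : ℝ} (hpq : p ≤ q) :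
    E q ≤ E p + (∫ t in p..q, h t * E t) ∧ E p ≤ E q + ∫ t in p..q, h t * E t := by
  have hEc : Continuous E := by
    rw [continuous_iff_continuousAt]; exact fun t => (hE t).continuousAt
  have hE'i : IntervalIntegrable E' volume p q := gron_E'_int hE hh hh0 hE0 hbd p q
  have hhE : IntervalIntegrable (fun t => h t * E t) volume p q :=
    (hh p q).mul_continuousOn hEc.continuousOn
  have hftc : ∫ t in p..q, E' t = E q - E p :=
    integral_eq_sub_of_hasDerivAt (fun t _ => hE t) hE'i
  have h1 : (∫ t in p..q, E' t) ≤ ∫ t in p..q, h t * E t :=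
    integral_mono_on hpq hE'i hhE fun t _ => (le_abs_self _).trans (hbd t)
  have h2 : (∫ t in p..q, (-E' t)) ≤ ∫ t in p..q, h t * E t :=
    integral_mono_on hpq hE'i.neg hhE fun t _ => (neg_le_abs _).trans (hbd t)
  rw [intervalIntegral.integral_neg] at h2
  constructor <;> linarith

lemma gron_piece (hE : ∀ t, HasDerivAt E (E' t) t)
    (hh : ∀ a b : ℝ, IntervalIntegrable h volume a b)
    (hh0 : ∀ t, 0 ≤ h t) (hE0 : ∀ t, 0 ≤ E t)
    (hbd : ∀ t, |E' t| ≤ h t * E t) {p q : ℝ} (hpq : p ≤ q)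
    (hsm : (∫ t in p..q, h t) ≤ 1/4) :
    ∀ r ∈ Icc p q, E r ≤ 2 * E p ∧ E p ≤ 2 * E r := by
  have hEc : Continuous E := by
    rw [continuous_iff_continuousAt]; exact fun t => (hE t).continuousAt
  obtain ⟨r₀, hr₀m, hr₀⟩ := isCompact_Icc.exists_isMaxOn ⟨p, left_mem_Icc.mpr hpq⟩
    hEc.continuousOn
  have key : ∀ r ∈ Icc p q, (∫ t in p..r, h t * E t) ≤ (1/4) * E r₀ := by
    intro r hr
    have hhE : IntervalIntegrable (fun t => h t * E t) volume p r :=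
      (hh p r).mul_continuousOn hEc.continuousOn
    have h1 : (∫ t in p..r, h t * E t) ≤ ∫ t in p..r, h t * E r₀ := by
      refine integral_mono_on hr.1 hhE ((hh p r).mul_const _) fun t ht => ?_
      exact mul_le_mul_of_nonneg_left (hr₀ ⟨ht.1, ht.2.trans hr.2⟩) (hh0 t)
    have h2 : (∫ t in p..r, h t) ≤ 1/4 := by
      refine le_trans ?_ hsm
      have := subint_le hh hh0 (le_refl p) hr.1 hr.2
      simpa using this
    have h3 : 0 ≤ E r₀ := hE0 r₀
    calc (∫ t in p..r, h t * E t) ≤ ∫ t in p..r, h t * E r₀ := h1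
      _ = (∫ t in p..r, h t) * E r₀ := by rw [intervalIntegral.integral_mul_const]
      _ ≤ (1/4) * E r₀ := mul_le_mul_of_nonneg_right h2 h3
  have hr₀bd : E r₀ ≤ (4/3) * E p := by
    have := (gron_int hE hh hh0 hE0 hbd hr₀m.1).1
    have hk := key r₀ hr₀m
    linarith
  intro r hr
  have hup := (gron_int hE hh hh0 hE0 hbd hr.1).1
  have hdn := (gron_int hE hh hh0 hE0 hbd hr.1).2
  have hk := key r hr
  have h0p := hE0 p
  have h0r := hE0 r
  constructor <;> linarith

lemma gron_chain (hE : ∀ t, HasDerivAt E (E' t) t)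
    (hh : ∀ a b : ℝ, IntervalIntegrable h volume a b)
    (hh0 : ∀ t, 0 ≤ h t) (hE0 : ∀ t, 0 ≤ E t)
    (hbd : ∀ t, |E' t| ≤ h t * E t) :
    ∀ n : ℕ, ∀ p q : ℝ, p ≤ q → (∫ t in p..q, h t) ≤ (n + 1) / 4 →
      ∀ r ∈ Icc p q, E r ≤ 2 ^ (n + 1) * E p ∧ E p ≤ 2 ^ (n + 1) * E r := by
  intro n
  induction n with
  | zero =>
    intro p q hpq hint r hr
    have := gron_piece hE hh hh0 hE0 hbd hpq (by norm_num at hint ⊢; linarith) r hr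
    simpa [pow_one] using this
  | succ n ih =>
    intro p q hpq hint r hr
    have h2n : (2:ℝ) ≤ 2 ^ (n + 1 + 1) := by
      calc (2:ℝ) = 2 ^ 1 := (pow_one 2).symm
        _ ≤ 2 ^ (n + 1 + 1) := pow_le_pow_right₀ one_le_two (by omega)
    by_cases hc : (∫ t in p..q, h t) ≤ 1/4
    · have hpc := gron_piece hE hh hh0 hE0 hbd hpq hc r hr
      have h0p := hE0 p
      have h0r := hE0 r
      constructor <;> nlinarith
    · push_neg at hc
      have hHc : Continuous fun r => ∫ t in p..r, h t :=
        continuous_primitive hh p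
      have hIVT : (1/4 : ℝ) ∈ Icc (∫ t in p..p, h t) (∫ t in p..q, h t) := by
        rw [integral_same]
        exact ⟨by norm_num, hc.le⟩
      obtain ⟨c, hcm, hc4⟩ := intermediate_value_Icc hpq hHc.continuousOn hIVT
      have hc4 : (∫ t in p..c, h t) = 1/4 := hc4
      have hadj : (∫ t in p..c, h t) + ∫ t in c..q, h t = ∫ t in p..q, h t :=
        integral_add_adjacent_intervals (hh p c) (hh c q)
      have hcq : (∫ t in c..q, h t) ≤ (n + 1) / 4 := by
        push_cast at hint ⊢
        rw [hc4] at hadj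
        linarith
      have hpiece := gron_piece hE hh hh0 hE0 hbd hcm.1 (le_of_eq hc4)
      have hEc2 := hpiece c (right_mem_Icc.mpr hcm.1)
      have hpow : (2:ℝ) ^ (n + 1 + 1) = 2 * 2 ^ (n + 1) := by ring
      rcases le_total r c with hrc | hcr
      · have := hpiece r ⟨hr.1, hrc⟩
        have h0p := hE0 p
        have h0r := hE0 r
        constructor <;> nlinarith
      · have hIH := ih c q hcm.2 hcq r ⟨hcr, hr.2⟩
        have h0p := hE0 p
        have h0r := hE0 r
        have h0c := hE0 c
        have hpow0 : (0:ℝ) < 2 ^ (n + 1) := by positivity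
        constructor <;> nlinarith
end gronwall

open scoped RealInnerProductSpace

/-- Elementary AM–GM with a parameter. -/
lemma amgm_param (d p q : ℝ) (hd : 0 < d) : 2 * (p * q) ≤ d * p ^ 2 + q ^ 2 / d := by
  rw [← sub_nonneg]
  have h : d * p ^ 2 + q ^ 2 / d - 2 * (p * q) = (d * p - q) ^ 2 / d := by
    field_simp; ring
  rw [h]; positivity

set_option maxHeartbeats 2000000 in
theorem solution_local_L2_lower_bound_gen (N : ℕ) (ℓ : ℝ) (hℓ : 0 < ℓ)
    (A : ℝ → EuclideanSpace ℝ (Fin N) →L[ℝ] EuclideanSpace ℝ (Fin N))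
    (hVloc : ∀ a b : ℝ, IntervalIntegrable (fun t => ‖A t‖) volume a b)
    (K : ℝ)
    (hK : ∀ x : ℝ, (∫ t in x..(x + ℓ), ‖A t‖) ≤ K) :
    ∃ C > 0, ∀ (u u' : ℝ → EuclideanSpace ℝ (Fin N)),
      (∀ t, HasDerivAt u (u' t) t) →
      (∀ t, HasDerivAt u' (A t (u t)) t) →
      ∀ x : ℝ, C * (‖u x‖ ^ 2 + ‖u' x‖ ^ 2) ≤ ∫ t in (x - ℓ)..(x + ℓ), ‖u t‖ ^ 2 := by
  have hK0 : 0 ≤ K :=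
    le_trans (intervalIntegral.integral_nonneg (by linarith) fun t _ => norm_nonneg _) (hK 0)
  set n : ℕ := ⌈8 * ℓ + 8 * K⌉₊ with hn
  set M : ℝ := 2 ^ (n + 1) with hM
  have hM0 : (0:ℝ) < M := by rw [hM]; positivity
  have hM1 : (1:ℝ) ≤ M := by rw [hM]; exact one_le_pow₀ one_le_two
  have hs0' : (0:ℝ) ≤ 4 * K + 1 := by linarith
  have hD0 : (0:ℝ) < 8 * (2 * K + 1) * M ^ 2 * ℓ ^ 2 + 64 * (4 * K + 1) * M ^ 4
      + 32 * K * (4 * K + 1) * M ^ 2 * ℓ + 16 * K * (4 * K + 1) ^ 2 * M ^ 2 * ℓ ^ 2 := by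
    have p1 : (0:ℝ) < 2 * K + 1 := by linarith
    have t1 : (0:ℝ) < 8 * (2 * K + 1) * M ^ 2 * ℓ ^ 2 :=
      mul_pos (mul_pos (mul_pos (by norm_num) p1) (pow_pos hM0 2)) (pow_pos hℓ 2)
    have t2 : (0:ℝ) ≤ 64 * (4 * K + 1) * M ^ 4 :=
      mul_nonneg (mul_nonneg (by norm_num) hs0') (pow_pos hM0 4).le
    have t3 : (0:ℝ) ≤ 32 * K * (4 * K + 1) * M ^ 2 * ℓ :=
      mul_nonneg (mul_nonneg (mul_nonneg (mul_nonneg (by norm_num) hK0) hs0')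
        (pow_pos hM0 2).le) hℓ.le
    have t4 : (0:ℝ) ≤ 16 * K * (4 * K + 1) ^ 2 * M ^ 2 * ℓ ^ 2 :=
      mul_nonneg (mul_nonneg (mul_nonneg (mul_nonneg (by norm_num) hK0) (sq_nonneg _))
        (pow_pos hM0 2).le) (pow_pos hℓ 2).le
    linarith
  have hC0 : (0:ℝ) < 6 * M * ℓ ^ 3 := by
    have := mul_pos hM0 (pow_pos hℓ 3)
    linarith
  refine ⟨6 * M * ℓ ^ 3 / (8 * (2 * K + 1) * M ^ 2 * ℓ ^ 2 + 64 * (4 * K + 1) * M ^ 4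
      + 32 * K * (4 * K + 1) * M ^ 2 * ℓ + 16 * K * (4 * K + 1) ^ 2 * M ^ 2 * ℓ ^ 2),
    div_pos hC0 hD0, ?_⟩
  intro u u' hu hu' x
  -- continuity of u, u'
  have huc : Continuous u := by
    rw [continuous_iff_continuousAt]; exact fun t => (hu t).continuousAt
  have hu'c : Continuous u' := by
    rw [continuous_iff_continuousAt]; exact fun t => (hu' t).continuousAt
  have hnu : Continuous fun t => ‖u t‖ ^ 2 := huc.norm.pow 2
  have hnu' : Continuous fun t => ‖u' t‖ ^ 2 := hu'c.norm.pow 2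
  set Q : ℝ := ∫ t in (x - ℓ)..(x + ℓ), ‖u t‖ ^ 2 with hQdef
  have hQint : ∀ a b : ℝ, IntervalIntegrable (fun t => ‖u t‖ ^ 2) volume a b :=
    fun a b => hnu.intervalIntegrable a b
  have hQ0 : 0 ≤ Q := intervalIntegral.integral_nonneg (by linarith) fun t _ => sq_nonneg _
  -- the weight h and the energy E
  set h : ℝ → ℝ := fun t => 1 + ‖A t‖ with hhdef
  have hhint : ∀ a b : ℝ, IntervalIntegrable h volume a b := fun a b =>
    intervalIntegrable_const.add (hVloc a b)
  have hh0 : ∀ t, 0 ≤ h t := fun t => by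
    have := norm_nonneg (A t); simp only [hhdef]; linarith
  set E : ℝ → ℝ := fun t => ‖u t‖ ^ 2 + ‖u' t‖ ^ 2 with hEdef
  set E' : ℝ → ℝ := fun t =>
    (⟪u t, u' t⟫ + ⟪u' t, u t⟫) + (⟪u' t, A t (u t)⟫ + ⟪A t (u t), u' t⟫) with hE'def
  have hE0 : ∀ t, 0 ≤ E t := fun t => by
    simp only [hEdef]; positivity
  have hns : ∀ (v v' : ℝ → EuclideanSpace ℝ (Fin N)), (∀ t, HasDerivAt v (v' t) t) →
      ∀ t, HasDerivAt (fun s => ‖v s‖ ^ 2) (⟪v t, v' t⟫ + ⟪v' t, v t⟫) t := by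
    intro v v' hv t
    have hh := HasDerivAt.inner ℝ (hv t) (hv t)
    have he : (fun s => (⟪v s, v s⟫ : ℝ)) = fun s => ‖v s‖ ^ 2 :=
      funext fun s => real_inner_self_eq_norm_sq (v s)
    rw [he] at hh
    exact hh
  have hEderiv : ∀ t, HasDerivAt E (E' t) t := fun t =>
    (hns u u' hu t).add (hns u' (fun s => A s (u s)) hu' t)
  have hbd : ∀ t, |E' t| ≤ h t * E t := by
    intro t
    have h1 : |(⟪u t, u' t⟫ : ℝ)| ≤ ‖u t‖ * ‖u' t‖ := abs_real_inner_le_norm _ _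
    have h1' : |(⟪u' t, u t⟫ : ℝ)| ≤ ‖u' t‖ * ‖u t‖ := abs_real_inner_le_norm _ _
    have h2 : |(⟪u' t, A t (u t)⟫ : ℝ)| ≤ ‖u' t‖ * ‖A t (u t)‖ := abs_real_inner_le_norm _ _
    have h2' : |(⟪A t (u t), u' t⟫ : ℝ)| ≤ ‖A t (u t)‖ * ‖u' t‖ := abs_real_inner_le_norm _ _
    have h3 : ‖A t (u t)‖ ≤ ‖A t‖ * ‖u t‖ := (A t).le_opNorm _
    have h5 : ‖u' t‖ * ‖A t (u t)‖ ≤ ‖u' t‖ * (‖A t‖ * ‖u t‖) :=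
      mul_le_mul_of_nonneg_left h3 (norm_nonneg _)
    have h5' : ‖A t (u t)‖ * ‖u' t‖ ≤ ‖A t‖ * ‖u t‖ * ‖u' t‖ :=
      mul_le_mul_of_nonneg_right h3 (norm_nonneg _)
    have habs : |E' t| ≤ |(⟪u t, u' t⟫ : ℝ)| + |(⟪u' t, u t⟫ : ℝ)|
        + (|(⟪u' t, A t (u t)⟫ : ℝ)| + |(⟪A t (u t), u' t⟫ : ℝ)|) := by
      simp only [hE'def]
      exact (abs_add_le _ _).trans (add_le_add (abs_add_le _ _) (abs_add_le _ _))
    simp only [hhdef, hEdef]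
    have hA0 : 0 ≤ ‖A t‖ := norm_nonneg _
    nlinarith [sq_nonneg (‖u t‖ - ‖u' t‖), mul_nonneg hA0 (sq_nonneg (‖u t‖ - ‖u' t‖))]
  -- total integral of h and the Gronwall-type bound
  have hAsplit : (∫ t in (x - ℓ)..(x + ℓ), ‖A t‖) ≤ 2 * K := by
    have h1 : (∫ t in (x - ℓ)..x, ‖A t‖) + ∫ t in x..(x + ℓ), ‖A t‖
        = ∫ t in (x - ℓ)..(x + ℓ), ‖A t‖ :=
      intervalIntegral.integral_add_adjacent_intervals (hVloc _ _) (hVloc _ _)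
    have h2 := hK (x - ℓ)
    rw [sub_add_cancel] at h2
    have h3 := hK x
    linarith
  have htot : (∫ t in (x - ℓ)..(x + ℓ), h t) ≤ (n + 1) / 4 := by
    have h1 : (∫ t in (x - ℓ)..(x + ℓ), h t)
        = (∫ t in (x - ℓ)..(x + ℓ), (1:ℝ)) + ∫ t in (x - ℓ)..(x + ℓ), ‖A t‖ := by
      simp only [hhdef]
      exact intervalIntegral.integral_add intervalIntegrable_const (hVloc _ _)
    rw [intervalIntegral.integral_const, smul_eq_mul, mul_one] at h1
    have hceil : 8 * ℓ + 8 * K ≤ (n : ℝ) := by rw [hn]; exact Nat.le_ceil _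
    rw [h1]
    linarith
  have hG : ∀ t ∈ Set.Icc (x - ℓ) (x + ℓ), E t ≤ M * E x ∧ E x ≤ M * E t := by
    intro t ht
    rw [hM]
    rcases le_total t x with htx | hxt
    · have hsub : (∫ s in t..x, h s) ≤ ((n : ℝ) + 1) / 4 :=
        le_trans (subint_le hhint hh0 ht.1 htx (by linarith)) htot
      have hc := gron_chain hEderiv hhint hh0 hE0 hbd n t x htx hsub x
        (Set.right_mem_Icc.mpr htx)
      exact ⟨hc.2, hc.1⟩
    · have hsub : (∫ s in x..t, h s) ≤ ((n : ℝ) + 1) / 4 :=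
        le_trans (subint_le hhint hh0 (by linarith) hxt ht.2) htot
      exact gron_chain hEderiv hhint hh0 hE0 hbd n x t hxt hsub t
        (Set.right_mem_Icc.mpr hxt)
  -- choice of good endpoints a and b
  have hl2a : x - ℓ ≤ x - ℓ / 2 := by linarith
  have hl2b : x + ℓ / 2 ≤ x + ℓ := by linarith
  obtain ⟨a, haI, haMin⟩ := isCompact_Icc.exists_isMinOn (Set.nonempty_Icc.mpr hl2a)
    (hnu.continuousOn : ContinuousOn (fun t => ‖u t‖ ^ 2) (Set.Icc (x - ℓ) (x - ℓ / 2)))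
  obtain ⟨b, hbI, hbMin⟩ := isCompact_Icc.exists_isMinOn (Set.nonempty_Icc.mpr hl2b)
    (hnu.continuousOn : ContinuousOn (fun t => ‖u t‖ ^ 2) (Set.Icc (x + ℓ / 2) (x + ℓ)))
  have hab : a ≤ b := by
    have := haI.2; have := hbI.1; linarith
  have haIcc : x - ℓ ≤ a ∧ a ≤ x + ℓ := ⟨haI.1, by linarith [haI.2]⟩
  have hbIcc : x - ℓ ≤ b ∧ b ≤ x + ℓ := ⟨by linarith [hbI.1], hbI.2⟩
  have hqa : ℓ * ‖u a‖ ^ 2 ≤ 2 * Q := by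
    have h1 : (∫ t in (x - ℓ)..(x - ℓ / 2), ‖u a‖ ^ 2)
        ≤ ∫ t in (x - ℓ)..(x - ℓ / 2), ‖u t‖ ^ 2 :=
      intervalIntegral.integral_mono_on hl2a intervalIntegrable_const (hQint _ _)
        fun t ht => haMin ht
    rw [intervalIntegral.integral_const, smul_eq_mul] at h1
    have h2 : (∫ t in (x - ℓ)..(x - ℓ / 2), ‖u t‖ ^ 2) ≤ Q :=
      subint_le hQint (fun t => sq_nonneg _) (le_refl (x - ℓ)) hl2a (by linarith)
    linarith [h1, h2]
  have hqb : ℓ * ‖u b‖ ^ 2 ≤ 2 * Q := by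
    have h1 : (∫ t in (x + ℓ / 2)..(x + ℓ), ‖u b‖ ^ 2)
        ≤ ∫ t in (x + ℓ / 2)..(x + ℓ), ‖u t‖ ^ 2 :=
      intervalIntegral.integral_mono_on hl2b intervalIntegrable_const (hQint _ _)
        fun t ht => hbMin ht
    rw [intervalIntegral.integral_const, smul_eq_mul] at h1
    have h2 : (∫ t in (x + ℓ / 2)..(x + ℓ), ‖u t‖ ^ 2) ≤ Q :=
      subint_le hQint (fun t => sq_nonneg _) (by linarith) hl2b (le_refl (x + ℓ))
    linarith [h1, h2]
  set P : ℝ := ∫ t in a..b, ‖u' t‖ ^ 2 with hPdef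
  have hP0 : 0 ≤ P := intervalIntegral.integral_nonneg hab fun t _ => sq_nonneg _
  have hQab : (∫ t in a..b, ‖u t‖ ^ 2) ≤ Q :=
    subint_le hQint (fun t => sq_nonneg _) haIcc.1 hab hbIcc.2
  -- pointwise bound on ‖u r‖² over [a, b] (division-free form)
  have hcont2 : Continuous fun t => ‖u' t‖ ^ 2 + (4 * K + 1) ^ 2 * ‖u t‖ ^ 2 :=
    hnu'.add (continuous_const.mul hnu)
  have hS : ∀ r ∈ Set.Icc a b,
      (4 * K + 1) * ‖u r‖ ^ 2 ≤ (4 * K + 1) * ‖u a‖ ^ 2 + P + (4 * K + 1) ^ 2 * Q := by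
    intro r hr
    have hftc : ∫ t in a..r, (⟪u t, u' t⟫ + ⟪u' t, u t⟫ : ℝ)
        = ‖u r‖ ^ 2 - ‖u a‖ ^ 2 :=
      intervalIntegral.integral_eq_sub_of_hasDerivAt
        (f := fun s => ‖u s‖ ^ 2) (fun t _ => hns u u' hu t)
        (((huc.inner hu'c).add (hu'c.inner huc)).intervalIntegrable a r)
    have hmono : (∫ t in a..r, (4 * K + 1) * (⟪u t, u' t⟫ + ⟪u' t, u t⟫ : ℝ))
        ≤ ∫ t in a..r, (‖u' t‖ ^ 2 + (4 * K + 1) ^ 2 * ‖u t‖ ^ 2) := by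
      refine intervalIntegral.integral_mono_on hr.1
        ((((huc.inner hu'c).add (hu'c.inner huc)).intervalIntegrable a r).const_mul _)
        (hcont2.intervalIntegrable a r) fun t _ => ?_
      have h1 : |(⟪u t, u' t⟫ : ℝ)| ≤ ‖u t‖ * ‖u' t‖ := abs_real_inner_le_norm _ _
      have h1' : |(⟪u' t, u t⟫ : ℝ)| ≤ ‖u' t‖ * ‖u t‖ := abs_real_inner_le_norm _ _
      have h2 : (⟪u t, u' t⟫ + ⟪u' t, u t⟫ : ℝ) ≤ 2 * (‖u t‖ * ‖u' t‖) := by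
        have h3 := le_abs_self (⟪u t, u' t⟫ : ℝ)
        have h3' := le_abs_self (⟪u' t, u t⟫ : ℝ)
        linarith
      have h4 : (4 * K + 1) * (⟪u t, u' t⟫ + ⟪u' t, u t⟫ : ℝ)
          ≤ (4 * K + 1) * (2 * (‖u t‖ * ‖u' t‖)) := mul_le_mul_of_nonneg_left h2 hs0'
      have h5 := sq_nonneg (‖u' t‖ - (4 * K + 1) * ‖u t‖)
      nlinarith [h4, h5]
    rw [intervalIntegral.integral_const_mul, hftc] at hmono
    have hmono2 : (∫ t in a..r, (‖u' t‖ ^ 2 + (4 * K + 1) ^ 2 * ‖u t‖ ^ 2))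
        ≤ ∫ t in a..b, (‖u' t‖ ^ 2 + (4 * K + 1) ^ 2 * ‖u t‖ ^ 2) :=
      subint_le (fun c d => hcont2.intervalIntegrable c d) (fun t => by positivity)
        (le_refl a) hr.1 hr.2
    have hsplit : (∫ t in a..b, (‖u' t‖ ^ 2 + (4 * K + 1) ^ 2 * ‖u t‖ ^ 2))
        = P + (4 * K + 1) ^ 2 * ∫ t in a..b, ‖u t‖ ^ 2 := by
      rw [intervalIntegral.integral_add (hnu'.intervalIntegrable a b)
        ((hnu.intervalIntegrable a b).const_mul _),
        intervalIntegral.integral_const_mul]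
    have hlast : (4 * K + 1) ^ 2 * (∫ t in a..b, ‖u t‖ ^ 2) ≤ (4 * K + 1) ^ 2 * Q :=
      mul_le_mul_of_nonneg_left hQab (sq_nonneg _)
    nlinarith [hmono, hmono2, hsplit, hlast]
  -- integrability of the potential term and integration by parts
  have hwm : IntervalIntegrable (fun t => (⟪u t, A t (u t)⟫ : ℝ)) volume a b := by
    obtain ⟨t₀, _, ht₀⟩ := isCompact_uIcc.exists_isMaxOn (nonempty_uIcc (a := a) (b := b))
      (hnu.continuousOn : ContinuousOn (fun t => ‖u t‖ ^ 2) (Set.uIcc a b))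
    refine ((hVloc a b).mul_const (‖u t₀‖ ^ 2)).mono_fun ?_ ?_
    · have heq : (fun t => (⟪u t, A t (u t)⟫ : ℝ)) = fun t => (⟪u t, deriv u' t⟫ : ℝ) :=
        funext fun t => by rw [(hu' t).deriv]
      rw [heq]
      exact (huc.measurable.inner (measurable_deriv u')).aestronglyMeasurable.restrict
    · filter_upwards [ae_restrict_mem measurableSet_uIoc] with t ht
      have h1 : |(⟪u t, A t (u t)⟫ : ℝ)| ≤ ‖u t‖ * ‖A t (u t)‖ := abs_real_inner_le_norm _ _
      have h2 : ‖u t‖ * ‖A t (u t)‖ ≤ ‖u t‖ * (‖A t‖ * ‖u t‖) :=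
        mul_le_mul_of_nonneg_left ((A t).le_opNorm _) (norm_nonneg _)
      have h3 : ‖u t‖ ^ 2 ≤ ‖u t₀‖ ^ 2 := ht₀ (Set.uIoc_subset_uIcc ht)
      have h4 : ‖A t‖ * ‖u t‖ ^ 2 ≤ ‖A t‖ * ‖u t₀‖ ^ 2 :=
        mul_le_mul_of_nonneg_left h3 (norm_nonneg _)
      rw [Real.norm_eq_abs, Real.norm_eq_abs]
      have h5 : 0 ≤ ‖A t‖ * ‖u t₀‖ ^ 2 := mul_nonneg (norm_nonneg _) (sq_nonneg _)
      rw [abs_of_nonneg h5]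
      nlinarith [h1, h2, h4]
  have hgftc : ∫ t in a..b, ((⟪u t, A t (u t)⟫ : ℝ) + ⟪u' t, u' t⟫)
      = ⟪u b, u' b⟫ - ⟪u a, u' a⟫ :=
    intervalIntegral.integral_eq_sub_of_hasDerivAt
      (fun t _ => HasDerivAt.inner ℝ (hu t) (hu' t))
      (hwm.add ((hu'c.inner hu'c).intervalIntegrable a b))
  have hPeq : P = ((⟪u b, u' b⟫ : ℝ) - ⟪u a, u' a⟫)
      - ∫ t in a..b, (⟪u t, A t (u t)⟫ : ℝ) := by
    have h1 : ∫ t in a..b, ((⟪u t, A t (u t)⟫ : ℝ) + ⟪u' t, u' t⟫)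
        = (∫ t in a..b, (⟪u t, A t (u t)⟫ : ℝ)) + ∫ t in a..b, (⟪u' t, u' t⟫ : ℝ) :=
      intervalIntegral.integral_add hwm ((hu'c.inner hu'c).intervalIntegrable a b)
    have h2 : (∫ t in a..b, (⟪u' t, u' t⟫ : ℝ)) = P := by
      rw [hPdef]
      exact intervalIntegral.integral_congr fun t _ => real_inner_self_eq_norm_sq (u' t)
    rw [h1, h2] at hgftc
    linarith
  -- boundary terms
  have hEax : E a ≤ M * E x := (hG a ⟨haIcc.1, haIcc.2⟩).1
  have hEbx : E b ≤ M * E x := (hG b ⟨hbIcc.1, hbIcc.2⟩).1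
  have hpa : ‖u' a‖ ^ 2 ≤ M * E x := by
    have h1 : ‖u a‖ ^ 2 + ‖u' a‖ ^ 2 ≤ M * E x := hEax
    nlinarith [sq_nonneg ‖u a‖]
  have hpb : ‖u' b‖ ^ 2 ≤ M * E x := by
    have h1 : ‖u b‖ ^ 2 + ‖u' b‖ ^ 2 ≤ M * E x := hEbx
    nlinarith [sq_nonneg ‖u b‖]
  have hga2 : -(8 * M ^ 2 * ℓ * (⟪u a, u' a⟫ : ℝ))
      ≤ ℓ ^ 2 * ‖u' a‖ ^ 2 + 16 * M ^ 4 * ‖u a‖ ^ 2 := by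
    have h1 : -(⟪u a, u' a⟫ : ℝ) ≤ ‖u a‖ * ‖u' a‖ :=
      (neg_le_abs _).trans (abs_real_inner_le_norm _ _)
    have h2 := sq_nonneg (ℓ * ‖u' a‖ - 4 * M ^ 2 * ‖u a‖)
    have h3 : 8 * M ^ 2 * ℓ * -(⟪u a, u' a⟫ : ℝ) ≤ 8 * M ^ 2 * ℓ * (‖u a‖ * ‖u' a‖) :=
      mul_le_mul_of_nonneg_left h1 (by positivity)
    nlinarith [h2, h3]
  have hgb2 : 8 * M ^ 2 * ℓ * (⟪u b, u' b⟫ : ℝ)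
      ≤ ℓ ^ 2 * ‖u' b‖ ^ 2 + 16 * M ^ 4 * ‖u b‖ ^ 2 := by
    have h1 : (⟪u b, u' b⟫ : ℝ) ≤ ‖u b‖ * ‖u' b‖ :=
      (le_abs_self _).trans (abs_real_inner_le_norm _ _)
    have h2 := sq_nonneg (ℓ * ‖u' b‖ - 4 * M ^ 2 * ‖u b‖)
    have h3 : 8 * M ^ 2 * ℓ * (⟪u b, u' b⟫ : ℝ) ≤ 8 * M ^ 2 * ℓ * (‖u b‖ * ‖u' b‖) :=
      mul_le_mul_of_nonneg_left h1 (by positivity)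
    nlinarith [h2, h3]
  -- bound on the potential integral (scaled by 4K+1)
  have hB0 : (0:ℝ) ≤ (4 * K + 1) * ‖u a‖ ^ 2 + P + (4 * K + 1) ^ 2 * Q := by
    have a1 := mul_nonneg hs0' (sq_nonneg ‖u a‖)
    have a2 := mul_nonneg (sq_nonneg (4 * K + 1)) hQ0
    linarith
  have hWs : -((4 * K + 1) * ∫ t in a..b, (⟪u t, A t (u t)⟫ : ℝ))
      ≤ 2 * K * ((4 * K + 1) * ‖u a‖ ^ 2 + P + (4 * K + 1) ^ 2 * Q) := by
    have h1 : -((4 * K + 1) * ∫ t in a..b, (⟪u t, A t (u t)⟫ : ℝ))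
        = ∫ t in a..b, (4 * K + 1) * -(⟪u t, A t (u t)⟫ : ℝ) := by
      simp only [mul_neg, intervalIntegral.integral_neg, intervalIntegral.integral_const_mul]
    have h2 : (∫ t in a..b, (4 * K + 1) * -(⟪u t, A t (u t)⟫ : ℝ))
        ≤ ∫ t in a..b, ‖A t‖ * ((4 * K + 1) * ‖u a‖ ^ 2 + P + (4 * K + 1) ^ 2 * Q) := by
      refine intervalIntegral.integral_mono_on hab (hwm.neg.const_mul _)
        ((hVloc a b).mul_const _) fun t ht => ?_
      have hS' := hS t ht
      have h3 : |(⟪u t, A t (u t)⟫ : ℝ)| ≤ ‖u t‖ * ‖A t (u t)‖ := abs_real_inner_le_norm _ _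
      have h4 : ‖u t‖ * ‖A t (u t)‖ ≤ ‖u t‖ * (‖A t‖ * ‖u t‖) :=
        mul_le_mul_of_nonneg_left ((A t).le_opNorm _) (norm_nonneg _)
      have h6 : -(⟪u t, A t (u t)⟫ : ℝ) ≤ ‖A t‖ * ‖u t‖ ^ 2 := by
        nlinarith [neg_le_abs (⟪u t, A t (u t)⟫ : ℝ), h3, h4]
      have h7 : (4 * K + 1) * -(⟪u t, A t (u t)⟫ : ℝ) ≤ (4 * K + 1) * (‖A t‖ * ‖u t‖ ^ 2) :=
        mul_le_mul_of_nonneg_left h6 hs0'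
      have h8 : ‖A t‖ * ((4 * K + 1) * ‖u t‖ ^ 2)
          ≤ ‖A t‖ * ((4 * K + 1) * ‖u a‖ ^ 2 + P + (4 * K + 1) ^ 2 * Q) :=
        mul_le_mul_of_nonneg_left hS' (norm_nonneg _)
      nlinarith [h7, h8]
    rw [intervalIntegral.integral_mul_const] at h2
    have h8 : (∫ t in a..b, ‖A t‖) ≤ 2 * K :=
      le_trans (subint_le hVloc (fun t => norm_nonneg _) haIcc.1 hab hbIcc.2) hAsplit
    have h9 := mul_le_mul_of_nonneg_right h8 hB0
    linarith [h1, h2, h9]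
  -- lower bound from the middle interval
  have hmid : x - ℓ / 2 ≤ x + ℓ / 2 := by linarith
  have hlow : ℓ * E x ≤ M * ((∫ t in (x - ℓ/2)..(x + ℓ/2), ‖u t‖ ^ 2)
      + ∫ t in (x - ℓ/2)..(x + ℓ/2), ‖u' t‖ ^ 2) := by
    have h1 : (∫ t in (x - ℓ/2)..(x + ℓ/2), E x) = ℓ * E x := by
      rw [intervalIntegral.integral_const, smul_eq_mul]
      ring_nf
    have h2 : (∫ t in (x - ℓ/2)..(x + ℓ/2), E x)
        ≤ ∫ t in (x - ℓ/2)..(x + ℓ/2), M * (‖u t‖ ^ 2 + ‖u' t‖ ^ 2) := by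
      refine intervalIntegral.integral_mono_on hmid intervalIntegrable_const
        ((continuous_const.mul (hnu.add hnu')).intervalIntegrable _ _) fun t ht => ?_
      exact (hG t ⟨by linarith [ht.1], by linarith [ht.2]⟩).2
    rw [intervalIntegral.integral_const_mul,
      intervalIntegral.integral_add (hnu.intervalIntegrable _ _)
        (hnu'.intervalIntegrable _ _)] at h2
    linarith [h1, h2]
  have hQh : (∫ t in (x - ℓ/2)..(x + ℓ/2), ‖u t‖ ^ 2) ≤ Q :=
    subint_le hQint (fun t => sq_nonneg _) (by linarith) hmid (by linarith)
  have hPh : (∫ t in (x - ℓ/2)..(x + ℓ/2), ‖u' t‖ ^ 2) ≤ P :=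
    subint_le (fun c d => hnu'.intervalIntegrable c d) (fun t => sq_nonneg _)
      haI.2 hmid hbI.1
  have hExeq : ‖u x‖ ^ 2 + ‖u' x‖ ^ 2 = E x := rfl
  clear_value n M Q P E E' h
  have hfin : ℓ * E x ≤ M * Q + M * P := by
    have h4 : M * ((∫ t in (x - ℓ/2)..(x + ℓ/2), ‖u t‖ ^ 2)
        + ∫ t in (x - ℓ/2)..(x + ℓ/2), ‖u' t‖ ^ 2) ≤ M * (Q + P) :=
      mul_le_mul_of_nonneg_left (add_le_add hQh hPh) hM0.le
    linarith [hlow, h4]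
  -- assemble the bound on P (all scaled, division-free)
  have hKl : (0:ℝ) ≤ (4 * K + 1) * ℓ := mul_nonneg hs0' hℓ.le
  have hga2s := mul_le_mul_of_nonneg_left hga2 hKl
  have hgb2s := mul_le_mul_of_nonneg_left hgb2 hKl
  have hpaMs := mul_le_mul_of_nonneg_left hpa
    (mul_nonneg hs0' (by positivity : (0:ℝ) ≤ ℓ ^ 3))
  have hpbMs := mul_le_mul_of_nonneg_left hpb
    (mul_nonneg hs0' (by positivity : (0:ℝ) ≤ ℓ ^ 3))
  have hqaMs := mul_le_mul_of_nonneg_left hqa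
    (mul_nonneg (mul_nonneg (by norm_num : (0:ℝ) ≤ 16) hs0') (by positivity : (0:ℝ) ≤ M ^ 4))
  have hqbMs := mul_le_mul_of_nonneg_left hqb
    (mul_nonneg (mul_nonneg (by norm_num : (0:ℝ) ≤ 16) hs0') (by positivity : (0:ℝ) ≤ M ^ 4))
  have hWs2 := mul_le_mul_of_nonneg_left hWs (by positivity : (0:ℝ) ≤ 8 * M ^ 2 * ℓ ^ 2)
  have hqaKs := mul_le_mul_of_nonneg_left hqa
    (mul_nonneg (mul_nonneg (mul_nonneg (mul_nonneg (by norm_num : (0:ℝ) ≤ 16) hK0) hs0')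
      (by positivity : (0:ℝ) ≤ M ^ 2)) hℓ.le)
  have hPeqs : 8 * (4 * K + 1) * M ^ 2 * ℓ ^ 2 * P
      = 8 * (4 * K + 1) * M ^ 2 * ℓ ^ 2 * ((⟪u b, u' b⟫ : ℝ) - ⟪u a, u' a⟫)
      - 8 * (4 * K + 1) * M ^ 2 * ℓ ^ 2 * ∫ t in a..b, (⟪u t, A t (u t)⟫ : ℝ) := by
    rw [hPeq]; ring
  have hPbc : 8 * (2 * K + 1) * M ^ 2 * ℓ ^ 2 * P
      ≤ 2 * (4 * K + 1) * M * ℓ ^ 3 * E x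
        + (64 * (4 * K + 1) * M ^ 4 + 32 * K * (4 * K + 1) * M ^ 2 * ℓ
          + 16 * K * (4 * K + 1) ^ 2 * M ^ 2 * ℓ ^ 2) * Q := by
    linarith [hPeqs, hga2s, hgb2s, hpaMs, hpbMs, hqaMs, hqbMs, hWs2, hqaKs]
  have hfins := mul_le_mul_of_nonneg_left hfin
    (mul_nonneg (mul_nonneg (mul_nonneg (by norm_num : (0:ℝ) ≤ 8)
      (by linarith : (0:ℝ) ≤ 2 * K + 1)) hM0.le) (by positivity : (0:ℝ) ≤ ℓ ^ 2))
  have hKEx : 0 ≤ K * (M * (ℓ ^ 3 * E x)) :=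
    mul_nonneg hK0 (mul_nonneg hM0.le (mul_nonneg (by positivity) (hE0 x)))
  -- conclusion
  rw [hExeq, div_mul_eq_mul_div, div_le_iff₀ hD0]
  linarith [hfins, hPbc, hKEx]

/-- If `V` has uniformly locally bounded `L¹` norm `‖V‖_{ℓ,u}`, then there is `C > 0`
(depending only on `ℓ` and `‖V‖_{ℓ,u}`) such that every solution `u` of `−u'' + Vu = 0`
satisfies `∫_{x−ℓ}^{x+ℓ} ‖u(t)‖² dt ≥ C(‖u(x)‖² + ‖u'(x)‖²)` for every `x`. -/
theorem solution_local_L2_lower_bound (N : ℕ) (ℓ : ℝ) (hℓ : 0 < ℓ)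
    (V : ℝ → Matrix (Fin N) (Fin N) ℝ)
    (hVloc : ∀ a b : ℝ,
      IntervalIntegrable (fun t => ‖Matrix.toEuclideanCLM (𝕜 := ℝ) (n := Fin N) (V t)‖)
        volume a b)
    (K : ℝ)
    (hK : ∀ x : ℝ, (∫ t in x..(x + ℓ), ‖Matrix.toEuclideanCLM (𝕜 := ℝ) (n := Fin N) (V t)‖) ≤ K) :
    ∃ C > 0, ∀ (u u' : ℝ → EuclideanSpace ℝ (Fin N)),
      (∀ t, HasDerivAt u (u' t) t) →
      (∀ t, HasDerivAt u' ((Matrix.toEuclideanCLM (𝕜 := ℝ) (n := Fin N) (V t)) (u t)) t) →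
      ∀ x : ℝ, C * (‖u x‖ ^ 2 + ‖u' x‖ ^ 2) ≤ ∫ t in (x - ℓ)..(x + ℓ), ‖u t‖ ^ 2 :=
  solution_local_L2_lower_bound_gen N ℓ hℓ
    (fun t => Matrix.toEuclideanCLM (𝕜 := ℝ) (n := Fin N) (V t)) hVloc K hK
end
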